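/- Under Assumption (A), there exist ε > 0 and C > 0 such that for every x ∈ 𝔹 with ‖x − x̄‖ ≤ ε and every Newton direction d at x, one has ‖d‖ ≤ C ‖x − x̄‖ and ‖x + d − x̄‖ ≤ C ‖x − x̄‖² (the Newton step is quadratically accurate before projection onto the sphere). -/

import Mathlib

open scoped RealInnerProductSpace

noncomputable section

/-- Euclidean space `ℝ^n`. -/
abbrev Euc (n : ℕ) : Type := EuclideanSpace ℝ (Fin n)

/-- An `m`-th order tensor on `ℝ^n`, viewed as a continuous `m`-multilinear form. -/
abbrev Tensor (m n : ℕ) : Type := ContinuousMultilinearMap ℝ (fun _ : Fin m => Euc n) ℝ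

/-- A tensor is symmetric if it is invariant under every permutation of its arguments. -/
def IsSymmTensor {m n : ℕ} (A : Tensor m n) : Prop :=
  ∀ (e : Equiv.Perm (Fin m)) (v : Fin m → Euc n), A (v ∘ e) = A v

/-- `A x^m`, the homogeneous form `A (x, …, x)`. -/
def tpow {m n : ℕ} (A : Tensor m n) (x : Euc n) : ℝ := A (fun _ => x)

/-- The last index of `Fin m`. -/
def lastIdx {m : ℕ} (_hm : 2 ≤ m) : Fin m := ⟨m - 1, by omega⟩

/-- The second to last index of `Fin m`. -/
def sndIdx {m : ℕ} (_hm : 2 ≤ m) : Fin m := ⟨m - 2, by omega⟩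

lemma sndIdx_ne_lastIdx {m : ℕ} (hm : 2 ≤ m) : sndIdx hm ≠ lastIdx hm := by
  simp only [sndIdx, lastIdx, Fin.mk.injEq, ne_eq]
  omega

/-- `A x^{m-1}`: the unique vector with `⟪A x^{m-1}, v⟫ = A (x, …, x, v)` for all `v`. -/
def tvec {m n : ℕ} (A : Tensor m n) (hm : 2 ≤ m) (x : Euc n) : Euc n :=
  (InnerProductSpace.toDual ℝ (Euc n)).symm
    (A.toContinuousLinearMap (fun _ => x) (lastIdx hm))

/-- `F(x) = A x^{m-1} - (A x^m) • x`. -/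
def Fvec {m n : ℕ} (A : Tensor m n) (hm : 2 ≤ m) (x : Euc n) : Euc n :=
  tvec A hm x - tpow A x • x

/-- `φ(x) = (1/m) A x^m`. -/
def phi {m n : ℕ} (A : Tensor m n) (x : Euc n) : ℝ := (1 / (m : ℝ)) * tpow A x

/-- Orthogonal projection `P_x d = d - ⟪x, d⟫ x` (for `x` a unit vector). -/
def Pproj {n : ℕ} (x d : Euc n) : Euc n := d - ⟪x, d⟫ • x

/-- `x(α) = (x + α d)/‖x + α d‖`, the projection of `x + α d` onto the unit sphere. -/
def xcur {n : ℕ} (x d : Euc n) (α : ℝ) : Euc n := ‖x + α • d‖⁻¹ • (x + α • d)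

/-- `w(x, d)`: the unique vector with `⟪w(x, d), v⟫ = A (x, …, x, d, v)` for all `v`. -/
def wvec {m n : ℕ} (A : Tensor m n) (hm : 2 ≤ m) (x d : Euc n) : Euc n :=
  (InnerProductSpace.toDual ℝ (Euc n)).symm
    (A.toContinuousLinearMap (Function.update (fun _ => x) (sndIdx hm) d) (lastIdx hm))

/-- `A (x, …, x, d, d)`. -/
def A2 {m n : ℕ} (A : Tensor m n) (hm : 2 ≤ m) (x d : Euc n) : ℝ :=
  A (Function.update (Function.update (fun _ => x) (sndIdx hm) d) (lastIdx hm) d)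

lemma wvec_add {m n : ℕ} (A : Tensor m n) (hm : 2 ≤ m) (x d₁ d₂ : Euc n) :
    wvec A hm x (d₁ + d₂) = wvec A hm x d₁ + wvec A hm x d₂ := by
  unfold wvec
  rw [← map_add]
  congr 1
  ext v
  simp only [ContinuousMultilinearMap.toContinuousLinearMap_apply, ContinuousLinearMap.add_apply]
  rw [Function.update_comm (sndIdx_ne_lastIdx hm), Function.update_comm (sndIdx_ne_lastIdx hm),
    Function.update_comm (sndIdx_ne_lastIdx hm)]
  exact A.map_update_add _ _ _ _

lemma wvec_smul {m n : ℕ} (A : Tensor m n) (hm : 2 ≤ m) (x : Euc n) (c : ℝ) (d : Euc n) :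
    wvec A hm x (c • d) = c • wvec A hm x d := by
  unfold wvec
  rw [← map_smul]
  congr 1
  ext v
  simp only [ContinuousMultilinearMap.toContinuousLinearMap_apply,
    ContinuousLinearMap.smul_apply, smul_eq_mul]
  rw [Function.update_comm (sndIdx_ne_lastIdx hm), Function.update_comm (sndIdx_ne_lastIdx hm)]
  exact A.map_update_smul _ _ _ _

/-- The Jacobian `F'(x) d = (m-1) w(x,d) - (A x^m) d - m ⟪A x^{m-1}, d⟫ x`. -/
def FderivL {m n : ℕ} (A : Tensor m n) (hm : 2 ≤ m) (x : Euc n) : Euc n →L[ℝ] Euc n :=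
  LinearMap.toContinuousLinearMap
  { toFun := fun d =>
      ((m : ℝ) - 1) • wvec A hm x d - tpow A x • d - ((m : ℝ) * ⟪tvec A hm x, d⟫) • x
    map_add' := by
      intro d₁ d₂
      try simp only
      rw [wvec_add, inner_add_right]
      module
    map_smul' := by
      intro c d
      simp only [RingHom.id_apply]
      rw [wvec_smul, inner_smul_right]
      module }

/-- A Newton direction at `x`: `⟪x, d⟫ = 0` and `P_x (F'(x) d + F(x)) = 0`. -/
def NewtonDir {m n : ℕ} (A : Tensor m n) (hm : 2 ≤ m) (x d : Euc n) : Prop :=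
  ⟪x, d⟫ = 0 ∧ Pproj x (FderivL A hm x d + Fvec A hm x) = 0

/-- The residual function `θ(x) = (1/2)‖F(x)‖²`. -/
def theta {m n : ℕ} (A : Tensor m n) (hm : 2 ≤ m) (x : Euc n) : ℝ :=
  (1 / 2) * ‖Fvec A hm x‖ ^ 2

/-- Assumption (A): second-order sufficient condition at the KKT point `x̄`. -/
def AssumpA {m n : ℕ} (A : Tensor m n) (hm : 2 ≤ m) (xb : Euc n) (lam : ℝ) : Prop :=
  ‖xb‖ = 1 ∧ tvec A hm xb = lam • xb ∧ lam = tpow A xb ∧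
    ∀ d : Euc n, d ≠ 0 → ⟪xb, d⟫ = 0 →
      0 < ((m : ℝ) - 1) * A2 A hm xb d - lam * ‖d‖ ^ 2

end

noncomputable section Helpers

open Finset in
variable {m n : ℕ}

lemma inner_tvec (A : Tensor m n) (hm : 2 ≤ m) (x v : Euc n) :
    ⟪tvec A hm x, v⟫ = A (Function.update (fun _ => x) (lastIdx hm) v) := by
  unfold tvec
  rw [InnerProductSpace.toDual_symm_apply]
  simp [ContinuousMultilinearMap.toContinuousLinearMap_apply]

lemma inner_wvec (A : Tensor m n) (hm : 2 ≤ m) (x d v : Euc n) :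
    ⟪wvec A hm x d, v⟫ =
      A (Function.update (Function.update (fun _ => x) (sndIdx hm) d) (lastIdx hm) v) := by
  unfold wvec
  rw [InnerProductSpace.toDual_symm_apply]
  simp [ContinuousMultilinearMap.toContinuousLinearMap_apply]

lemma update_const_self (x : Euc n) (i : Fin m) :
    Function.update (fun _ => x) i x = fun _ => x :=
  Function.update_eq_self i (fun _ => x)

lemma inner_tvec_self (A : Tensor m n) (hm : 2 ≤ m) (x : Euc n) :
    ⟪tvec A hm x, x⟫ = tpow A x := by
  rw [inner_tvec, update_const_self]; rfl

lemma wvec_self (A : Tensor m n) (hm : 2 ≤ m) (x : Euc n) :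
    wvec A hm x x = tvec A hm x := by
  unfold wvec tvec
  rw [update_const_self]

lemma wvec_zero (A : Tensor m n) (hm : 2 ≤ m) (x : Euc n) :
    wvec A hm x 0 = 0 := by
  have h := wvec_smul A hm x 0 0
  simpa using h

lemma eval_update_eq (A : Tensor m n) (hA : IsSymmTensor A) (x d : Euc n) (i j : Fin m) :
    A (Function.update (fun _ => x) i d) = A (Function.update (fun _ => x) j d) := by
  have key : (Function.update (fun _ => x) j d) ∘ (Equiv.swap i j)
      = Function.update (fun _ => x) i d := by
    funext k
    rcases eq_or_ne k i with rfl | hki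
    · simp [Equiv.swap_apply_left, Function.update_apply]
    · rcases eq_or_ne k j with rfl | hkj
      · have hij : i ≠ k := fun h => hki h.symm
        simp [Equiv.swap_apply_right, Function.update_apply, hij, hij.symm]
      · simp [Equiv.swap_apply_of_ne_of_ne hki hkj, Function.update_apply, hki, hkj]
  rw [← key, hA]

lemma eval_update2_eq (A : Tensor m n) (hm : 2 ≤ m) (hA : IsSymmTensor A)
    (x v d : Euc n) (i : Fin m) (hi : i ≠ lastIdx hm) :
    A (Function.update (Function.update (fun _ => x) (lastIdx hm) v) i d)
      = A (Function.update (Function.update (fun _ => x) (sndIdx hm) d) (lastIdx hm) v) := by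
  have hsl := sndIdx_ne_lastIdx hm
  rcases eq_or_ne i (sndIdx hm) with rfl | his
  · rw [Function.update_comm hi]
  · have key : (Function.update (Function.update (fun _ => x) (sndIdx hm) d) (lastIdx hm) v)
        ∘ (Equiv.swap i (sndIdx hm))
        = Function.update (Function.update (fun _ => x) (lastIdx hm) v) i d := by
      funext k
      rcases eq_or_ne k i with rfl | hki
      · simp [Equiv.swap_apply_left, Function.update_apply, hsl, hi, his]
      · rcases eq_or_ne k (sndIdx hm) with rfl | hks
        · simp [Equiv.swap_apply_right, Function.update_apply, hi, his, his.symm, hki, hsl]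
        · simp [Equiv.swap_apply_of_ne_of_ne hki hks, Function.update_apply, hki, hks]
    rw [← key, hA]

lemma inner_wvec_symm (A : Tensor m n) (hm : 2 ≤ m) (hA : IsSymmTensor A) (x d v : Euc n) :
    ⟪wvec A hm x d, v⟫ = ⟪wvec A hm x v, d⟫ := by
  have hsl := sndIdx_ne_lastIdx hm
  rw [inner_wvec, inner_wvec]
  have key : (Function.update (Function.update (fun _ => x) (sndIdx hm) v) (lastIdx hm) d)
      ∘ (Equiv.swap (sndIdx hm) (lastIdx hm))
      = Function.update (Function.update (fun _ => x) (sndIdx hm) d) (lastIdx hm) v := by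
    funext k
    rcases eq_or_ne k (sndIdx hm) with rfl | hks
    · simp [Equiv.swap_apply_left, Function.update_apply, hsl]
    · rcases eq_or_ne k (lastIdx hm) with rfl | hkl
      · simp [Equiv.swap_apply_right, Function.update_apply, hsl, hsl.symm]
      · simp [Equiv.swap_apply_of_ne_of_ne hks hkl, Function.update_apply, hks, hkl]
  rw [← key, hA]

lemma A2_eq_inner_wvec (A : Tensor m n) (hm : 2 ≤ m) (x d : Euc n) :
    A2 A hm x d = ⟪wvec A hm x d, d⟫ := by
  rw [inner_wvec]; rfl

end Helpers
noncomputable section Helpers2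

variable {m n : ℕ}

/-- `wvec` as a continuous linear map in `d`. -/
def wvecL (A : Tensor m n) (hm : 2 ≤ m) (x : Euc n) : Euc n →L[ℝ] Euc n :=
  LinearMap.toContinuousLinearMap
  { toFun := wvec A hm x
    map_add' := wvec_add A hm x
    map_smul' := by intro c d; simp [wvec_smul] }

@[simp] lemma wvecL_apply (A : Tensor m n) (hm : 2 ≤ m) (x d : Euc n) :
    wvecL A hm x d = wvec A hm x d := rfl

@[simp] lemma FderivL_apply (A : Tensor m n) (hm : 2 ≤ m) (x d : Euc n) :
    FderivL A hm x d
      = ((m : ℝ) - 1) • wvec A hm x d - tpow A x • d - ((m : ℝ) * ⟪tvec A hm x, d⟫) • x := rfl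

lemma tvec_eq_sum (A : Tensor m n) (hm : 2 ≤ m) (x : Euc n) :
    tvec A hm x = ∑ j, A (Function.update (fun _ => x) (lastIdx hm)
      ((stdOrthonormalBasis ℝ (Euc n)) j)) • (stdOrthonormalBasis ℝ (Euc n)) j := by
  rw [← (stdOrthonormalBasis ℝ (Euc n)).sum_repr' (tvec A hm x)]
  refine Finset.sum_congr rfl fun j _ => ?_
  rw [real_inner_comm, inner_tvec]

lemma wvec_eq_sum (A : Tensor m n) (hm : 2 ≤ m) (x d : Euc n) :
    wvec A hm x d = ∑ j, A (Function.update (Function.update (fun _ => x) (sndIdx hm) d)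
      (lastIdx hm) ((stdOrthonormalBasis ℝ (Euc n)) j)) • (stdOrthonormalBasis ℝ (Euc n)) j := by
  rw [← (stdOrthonormalBasis ℝ (Euc n)).sum_repr' (wvec A hm x d)]
  refine Finset.sum_congr rfl fun j _ => ?_
  rw [real_inner_comm, inner_wvec]

lemma continuous_tpow (A : Tensor m n) : Continuous (tpow A) :=
  A.cont.comp (continuous_pi fun _ => continuous_id)

lemma continuous_tvec (A : Tensor m n) (hm : 2 ≤ m) : Continuous (tvec A hm) := by
  have h : tvec A hm = fun x => ∑ j, A (Function.update (fun _ => x) (lastIdx hm)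
      ((stdOrthonormalBasis ℝ (Euc n)) j)) • (stdOrthonormalBasis ℝ (Euc n)) j :=
    funext fun x => tvec_eq_sum A hm x
  rw [h]
  refine continuous_finset_sum _ fun j _ => Continuous.fun_smul ?_ continuous_const
  refine A.cont.comp (continuous_pi fun i => ?_)
  simp only [Function.update_apply]
  split_ifs
  exacts [continuous_const, continuous_id]

lemma continuous_wvec_pair (A : Tensor m n) (hm : 2 ≤ m) :
    Continuous (fun p : Euc n × Euc n => wvec A hm p.1 p.2) := by
  have h : (fun p : Euc n × Euc n => wvec A hm p.1 p.2)
      = fun p => ∑ j, A (Function.update (Function.update (fun _ => p.1) (sndIdx hm) p.2)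
        (lastIdx hm) ((stdOrthonormalBasis ℝ (Euc n)) j)) • (stdOrthonormalBasis ℝ (Euc n)) j :=
    funext fun p => wvec_eq_sum A hm p.1 p.2
  rw [h]
  refine continuous_finset_sum _ fun j _ => Continuous.fun_smul ?_ continuous_const
  refine A.cont.comp (continuous_pi fun i => ?_)
  simp only [Function.update_apply]
  split_ifs
  exacts [continuous_const, continuous_snd, continuous_fst]

lemma contDiff_tpow (A : Tensor m n) : ContDiff ℝ 2 (tpow A) :=
  A.contDiff.comp (contDiff_pi.mpr fun _ => contDiff_id)

lemma contDiff_tvec (A : Tensor m n) (hm : 2 ≤ m) : ContDiff ℝ 2 (tvec A hm) := by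
  have h : tvec A hm = fun x => ∑ j, A (Function.update (fun _ => x) (lastIdx hm)
      ((stdOrthonormalBasis ℝ (Euc n)) j)) • (stdOrthonormalBasis ℝ (Euc n)) j :=
    funext fun x => tvec_eq_sum A hm x
  rw [h]
  refine ContDiff.sum fun j _ => ContDiff.fun_smul ?_ contDiff_const
  refine A.contDiff.comp (contDiff_pi.mpr fun i => ?_)
  simp only [Function.update_apply]
  split_ifs
  exacts [contDiff_const, contDiff_id]

lemma contDiff_Fvec (A : Tensor m n) (hm : 2 ≤ m) : ContDiff ℝ 2 (Fvec A hm) := by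
  have h : Fvec A hm = fun x => tvec A hm x - tpow A x • x := rfl
  rw [h]
  exact (contDiff_tvec A hm).sub ((contDiff_tpow A).smul contDiff_id)

end Helpers2
noncomputable section Helpers3

variable {m n : ℕ}

lemma sum_ite_last {m : ℕ} (hm : 2 ≤ m) (c : ℝ) :
    ∑ i : Fin m, (if i = lastIdx hm then (0:ℝ) else c) = ((m : ℝ) - 1) * c := by
  classical
  rw [← Finset.add_sum_erase Finset.univ _ (Finset.mem_univ (lastIdx hm))]
  rw [if_pos rfl, zero_add]
  rw [Finset.sum_congr rfl (fun i hi => if_neg (Finset.ne_of_mem_erase hi))]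
  rw [Finset.sum_const, Finset.card_erase_of_mem (Finset.mem_univ _), Finset.card_univ,
    Fintype.card_fin, nsmul_eq_mul, Nat.cast_sub (by omega), Nat.cast_one]

lemma hasFDerivAt_evalupdate (A : Tensor m n) (hm : 2 ≤ m) (hA : IsSymmTensor A)
    (v x0 : Euc n) :
    HasFDerivAt (fun x : Euc n => A (Function.update (fun _ => x) (lastIdx hm) v))
      (((m : ℝ) - 1) • ((innerSL ℝ v).comp (wvecL A hm x0))) x0 := by
  classical
  set g : Fin m → Euc n → Euc n := fun i x => if i = lastIdx hm then v else x with hg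
  set g' : Fin m → Euc n →L[ℝ] Euc n :=
    fun i => if i = lastIdx hm then 0 else ContinuousLinearMap.id ℝ (Euc n) with hg'
  have hgd : ∀ i, HasFDerivAt (g i) (g' i) x0 := by
    intro i
    by_cases h : i = lastIdx hm
    · simpa [hg, hg', h] using hasFDerivAt_const v x0
    · simp only [hg, hg', h, if_false, ↓reduceIte]; exact hasFDerivAt_id x0
  have H := HasFDerivAt.multilinear_comp A (g := g) (g' := g') hgd
  have hfun : (fun x : Euc n => A fun i => g i x)
      = fun x : Euc n => A (Function.update (fun _ => x) (lastIdx hm) v) := by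
    funext x
    congr 1
    funext i
    simp [hg, Function.update_apply]
  have hargs : (fun j => g j x0) = Function.update (fun _ => x0) (lastIdx hm) v := by
    funext i
    simp [hg, Function.update_apply]
  have hder : (∑ i : Fin m, (A.toContinuousLinearMap (fun j => g j x0) i).comp (g' i))
      = ((m : ℝ) - 1) • ((innerSL ℝ v).comp (wvecL A hm x0)) := by
    ext e
    simp only [ContinuousLinearMap.sum_apply, ContinuousLinearMap.coe_comp',
      Function.comp_apply, ContinuousLinearMap.smul_apply, innerSL_apply_apply, wvecL_apply,
      ContinuousMultilinearMap.toContinuousLinearMap_apply]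
    have hterm : ∀ i : Fin m,
        A (Function.update (fun j => g j x0) i (g' i e))
          = if i = lastIdx hm then (0:ℝ) else ⟪wvec A hm x0 e, v⟫ := by
      intro i
      by_cases h : i = lastIdx hm
      · rw [if_pos h]
        have hz : g' i e = 0 := by simp [hg', h]
        rw [hz]
        exact A.map_update_zero _ _
      · rw [if_neg h]
        have hz : g' i e = e := by simp [hg', h]
        rw [hz, hargs, eval_update2_eq A hm hA x0 v e i h, ← inner_wvec]
    rw [Finset.sum_congr rfl (fun i _ => hterm i), sum_ite_last hm, smul_eq_mul,
      real_inner_comm]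
  rw [← hfun, ← hder]
  exact H

lemma hasFDerivAt_tpow (A : Tensor m n) (hm : 2 ≤ m) (hA : IsSymmTensor A) (x0 : Euc n) :
    HasFDerivAt (tpow A) ((m : ℝ) • (innerSL ℝ (tvec A hm x0))) x0 := by
  classical
  have hgd : ∀ i : Fin m, HasFDerivAt (fun x : Euc n => x)
      (ContinuousLinearMap.id ℝ (Euc n)) x0 := fun _ => hasFDerivAt_id x0
  have H := HasFDerivAt.multilinear_comp A (g := fun _ x => x)
    (g' := fun _ => ContinuousLinearMap.id ℝ (Euc n)) hgd
  have hder : (∑ i : Fin m, (A.toContinuousLinearMap (fun _ => x0) i).comp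
        (ContinuousLinearMap.id ℝ (Euc n)))
      = (m : ℝ) • (innerSL ℝ (tvec A hm x0)) := by
    ext e
    simp only [ContinuousLinearMap.sum_apply, ContinuousLinearMap.coe_comp',
      Function.comp_apply, ContinuousLinearMap.smul_apply, innerSL_apply_apply,
      ContinuousLinearMap.id_apply, ContinuousMultilinearMap.toContinuousLinearMap_apply]
    have hterm : ∀ i : Fin m, A (Function.update (fun _ => x0) i e)
        = ⟪tvec A hm x0, e⟫ := by
      intro i
      rw [eval_update_eq A hA x0 e i (lastIdx hm), ← inner_tvec]
    rw [Finset.sum_congr rfl (fun i _ => hterm i), Finset.sum_const, Finset.card_univ,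
      Fintype.card_fin, nsmul_eq_mul, smul_eq_mul]
  rw [show tpow A = fun x : Euc n => A (fun _ => x) from rfl, ← hder]
  exact H

lemma hasFDerivAt_tvec (A : Tensor m n) (hm : 2 ≤ m) (hA : IsSymmTensor A) (x0 : Euc n) :
    HasFDerivAt (tvec A hm) (((m : ℝ) - 1) • wvecL A hm x0) x0 := by
  have hfun : tvec A hm = fun x => ∑ j, A (Function.update (fun _ => x) (lastIdx hm)
      ((stdOrthonormalBasis ℝ (Euc n)) j)) • (stdOrthonormalBasis ℝ (Euc n)) j :=
    funext fun x => tvec_eq_sum A hm x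
  have H : HasFDerivAt (fun x => ∑ j, A (Function.update (fun _ => x) (lastIdx hm)
        ((stdOrthonormalBasis ℝ (Euc n)) j)) • (stdOrthonormalBasis ℝ (Euc n)) j)
      (∑ j, ((((m : ℝ) - 1) • ((innerSL ℝ ((stdOrthonormalBasis ℝ (Euc n)) j)).comp
        (wvecL A hm x0))).smulRight ((stdOrthonormalBasis ℝ (Euc n)) j))) x0 :=
    HasFDerivAt.fun_sum fun j _ =>
      (hasFDerivAt_evalupdate A hm hA ((stdOrthonormalBasis ℝ (Euc n)) j) x0).smul_const _
  have hder : (∑ j, ((((m : ℝ) - 1) • ((innerSL ℝ ((stdOrthonormalBasis ℝ (Euc n)) j)).comp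
        (wvecL A hm x0))).smulRight ((stdOrthonormalBasis ℝ (Euc n)) j)))
      = ((m : ℝ) - 1) • wvecL A hm x0 := by
    ext e
    simp only [ContinuousLinearMap.sum_apply, ContinuousLinearMap.smulRight_apply,
      ContinuousLinearMap.smul_apply, ContinuousLinearMap.coe_comp', Function.comp_apply,
      innerSL_apply_apply, wvecL_apply, smul_eq_mul]
    simp_rw [mul_smul]
    rw [← Finset.smul_sum, (stdOrthonormalBasis ℝ (Euc n)).sum_repr' (wvec A hm x0 e)]
  rw [hfun, ← hder]
  exact H

lemma hasFDerivAt_Fvec (A : Tensor m n) (hm : 2 ≤ m) (hA : IsSymmTensor A) (x0 : Euc n) :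
    HasFDerivAt (Fvec A hm) (FderivL A hm x0) x0 := by
  have h2 : HasFDerivAt (fun x : Euc n => tpow A x • x)
      (tpow A x0 • ContinuousLinearMap.id ℝ (Euc n)
        + ((m : ℝ) • (innerSL ℝ (tvec A hm x0))).smulRight x0) x0 :=
    (hasFDerivAt_tpow A hm hA x0).smul (hasFDerivAt_id x0)
  have h3 := (hasFDerivAt_tvec A hm hA x0).sub h2
  have heq : (((m : ℝ) - 1) • wvecL A hm x0)
      - (tpow A x0 • ContinuousLinearMap.id ℝ (Euc n)
        + ((m : ℝ) • (innerSL ℝ (tvec A hm x0))).smulRight x0) = FderivL A hm x0 := by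
    refine ContinuousLinearMap.ext fun e => ?_
    simp only [ContinuousLinearMap.sub_apply, ContinuousLinearMap.add_apply,
      ContinuousLinearMap.smul_apply, ContinuousLinearMap.smulRight_apply,
      ContinuousLinearMap.id_apply, innerSL_apply_apply, wvecL_apply, FderivL_apply, smul_eq_mul]
    module
  rw [show Fvec A hm = fun x => tvec A hm x - tpow A x • x from rfl, ← heq]
  exact h3

lemma fderiv_Fvec_eq (A : Tensor m n) (hm : 2 ≤ m) (hA : IsSymmTensor A) (x0 : Euc n) :
    fderiv ℝ (Fvec A hm) x0 = FderivL A hm x0 :=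
  (hasFDerivAt_Fvec A hm hA x0).fderiv

end Helpers3
noncomputable section Helpers4

variable {m n : ℕ}

lemma Pproj_add (x a b : Euc n) : Pproj x (a + b) = Pproj x a + Pproj x b := by
  unfold Pproj
  rw [inner_add_right]
  module

lemma norm_Pproj_le (x y : Euc n) (hx : ‖x‖ = 1) : ‖Pproj x y‖ ≤ ‖y‖ := by
  have hsq : ‖Pproj x y‖ ^ 2 = ‖y‖ ^ 2 - ⟪x, y⟫ ^ 2 := by
    unfold Pproj
    rw [norm_sub_sq_real, real_inner_smul_right, norm_smul]
    rw [real_inner_comm y x]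
    simp [hx]
    ring
  nlinarith [norm_nonneg (Pproj x y), norm_nonneg y, sq_nonneg (⟪x, y⟫ : ℝ)]

lemma inner_Pproj_eq (x y t : Euc n) (ht : ⟪x, t⟫ = 0) : ⟪Pproj x y, t⟫ = ⟪y, t⟫ := by
  unfold Pproj
  rw [inner_sub_left, real_inner_smul_left, ht]
  ring

lemma inner_Pproj_self (x t : Euc n) (hx : ‖x‖ = 1) : ⟪x, Pproj x t⟫ = 0 := by
  unfold Pproj
  rw [inner_sub_right, real_inner_smul_right, real_inner_self_eq_norm_sq, hx]
  ring

/-- inner product against `FderivL` for tangent vectors -/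
lemma inner_FderivL (A : Tensor m n) (hm : 2 ≤ m) (x d t : Euc n) (hxd : ⟪x, d⟫ = 0)
    (hdt : d = t) :
    ⟪FderivL A hm x d, t⟫
      = ((m : ℝ) - 1) * ⟪wvec A hm x d, d⟫ - tpow A x * ‖d‖ ^ 2 := by
  subst hdt
  rw [FderivL_apply, inner_sub_left, inner_sub_left, real_inner_smul_left,
    real_inner_smul_left, real_inner_smul_left, hxd, real_inner_self_eq_norm_sq]
  ring

/-- auxiliary function for the coercivity argument -/
def Qtil (A : Tensor m n) (hm : 2 ≤ m) (p : Euc n × Euc n) : ℝ :=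
  ((m : ℝ) - 1) * ⟪wvec A hm p.1 (Pproj p.1 p.2), Pproj p.1 p.2⟫
    - tpow A p.1 * ‖Pproj p.1 p.2‖ ^ 2 + ⟪p.1, p.2⟫ ^ 2

lemma Qtil_mk (A : Tensor m n) (hm : 2 ≤ m) (x d : Euc n) :
    Qtil A hm (x, d) = ((m : ℝ) - 1) * ⟪wvec A hm x (Pproj x d), Pproj x d⟫
      - tpow A x * ‖Pproj x d‖ ^ 2 + ⟪x, d⟫ ^ 2 := rfl

lemma continuous_Qtil (A : Tensor m n) (hm : 2 ≤ m) : Continuous (Qtil A hm) := by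
  have hPcont : Continuous (fun p : Euc n × Euc n => Pproj p.1 p.2) := by
    unfold Pproj
    exact continuous_snd.sub ((continuous_fst.inner continuous_snd).fun_smul continuous_fst)
  unfold Qtil
  refine Continuous.add (Continuous.sub (Continuous.mul continuous_const ?_)
    (Continuous.mul ((continuous_tpow A).comp continuous_fst) (hPcont.norm.pow 2)))
    ((continuous_fst.inner continuous_snd).pow 2)
  exact Continuous.inner
    ((continuous_wvec_pair A hm).comp (continuous_fst.prodMk hPcont)) hPcont

/-- Local coercivity of the projected Hessian near `xb`. -/
lemma coercivity (A : Tensor m n) (hm : 2 ≤ m) (xb : Euc n) (lam : ℝ)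
    (hAss : AssumpA A hm xb lam) :
    ∃ c > 0, ∃ ε₀ > 0, ∀ x : Euc n, ‖x - xb‖ < ε₀ → ∀ d : Euc n, ⟪x, d⟫ = 0 →
      c * ‖d‖ ^ 2 ≤ ((m : ℝ) - 1) * ⟪wvec A hm x d, d⟫ - tpow A x * ‖d‖ ^ 2 := by
  obtain ⟨hxb1, heig, hlam, hsosc⟩ := hAss
  have hpos : ∀ d : Euc n, ‖d‖ = 1 → 0 < Qtil A hm (xb, d) := by
    intro d hd
    have hxp : ⟪xb, Pproj xb d⟫ = 0 := inner_Pproj_self xb d hxb1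
    by_cases hp0 : Pproj xb d = 0
    · have hd_eq : d = ⟪xb, d⟫ • xb := by
        have h0 : d - ⟪xb, d⟫ • xb = 0 := hp0
        rw [sub_eq_zero] at h0
        exact h0
      have hinner : ⟪xb, d⟫ ≠ 0 := by
        intro h
        rw [h, zero_smul] at hd_eq
        rw [hd_eq, norm_zero] at hd
        norm_num at hd
      have hsq : (0:ℝ) < ⟪xb, d⟫ ^ 2 := by positivity
      rw [Qtil_mk, hp0]
      simpa [wvec_zero] using hsq
    · have hQ := hsosc (Pproj xb d) hp0 hxp
      rw [A2_eq_inner_wvec] at hQ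
      have hsq : 0 ≤ (⟪xb, d⟫ : ℝ) ^ 2 := sq_nonneg _
      rw [Qtil_mk, ← hlam]
      nlinarith
  have hScomp : IsCompact (Metric.sphere (0 : Euc n) 1) := isCompact_sphere 0 1
  have hSne : (Metric.sphere (0 : Euc n) 1).Nonempty := ⟨xb, by simp [hxb1]⟩
  obtain ⟨c, hc, hcle⟩ : ∃ c, 0 < c ∧
      ∀ d ∈ Metric.sphere (0 : Euc n) 1, c < Qtil A hm (xb, d) := by
    obtain ⟨d₀, hd₀S, hmin⟩ := hScomp.exists_isMinOn hSne
      (((continuous_Qtil A hm).comp (Continuous.prodMk_right xb)).continuousOn)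
    have hd₀ : ‖d₀‖ = 1 := by simpa using hd₀S
    refine ⟨Qtil A hm (xb, d₀) / 2, half_pos (hpos d₀ hd₀), fun d hdS => ?_⟩
    have h1 := hmin hdS
    simp only [Function.comp, Set.mem_setOf_eq] at h1
    have h2 := hpos d₀ hd₀
    linarith
  have hV : IsOpen {p : Euc n × Euc n | c < Qtil A hm p} :=
    isOpen_lt continuous_const (continuous_Qtil A hm)
  have hsub : ({xb} : Set (Euc n)) ×ˢ Metric.sphere (0 : Euc n) 1
      ⊆ {p | c < Qtil A hm p} := by
    rintro ⟨a, d⟩ ⟨ha, hdS⟩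
    have ha' : a = xb := ha
    subst ha'
    exact hcle d hdS
  obtain ⟨u, v, hu, hv, hxbu, hSv, huv⟩ :=
    generalized_tube_lemma isCompact_singleton hScomp hV hsub
  obtain ⟨ε₀, hε₀, hball⟩ := Metric.isOpen_iff.1 hu xb (hxbu rfl)
  refine ⟨c, hc, ε₀, hε₀, ?_⟩
  intro x hxε d hxd
  rcases eq_or_ne d 0 with rfl | hd0
  · simp [wvec_zero]
  · set dh := ‖d‖⁻¹ • d with hdh
    have hdn : ‖d‖ ≠ 0 := norm_ne_zero_iff.mpr hd0
    have hdhn : ‖dh‖ = 1 := by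
      rw [hdh, norm_smul, norm_inv, norm_norm, inv_mul_cancel₀ hdn]
    have hxdh : ⟪x, dh⟫ = 0 := by
      rw [hdh, real_inner_smul_right, hxd, mul_zero]
    have hPdh : Pproj x dh = dh := by
      unfold Pproj
      rw [hxdh, zero_smul, sub_zero]
    have hmem : (x, dh) ∈ {p : Euc n × Euc n | c < Qtil A hm p} := by
      apply huv
      constructor
      · exact hball (by simpa [Metric.mem_ball, dist_eq_norm] using hxε)
      · exact hSv (by simp [hdhn])
    have hws : ⟪wvec A hm x dh, dh⟫ = ‖d‖⁻¹ ^ 2 * ⟪wvec A hm x d, d⟫ := by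
      rw [hdh, wvec_smul, real_inner_smul_left, real_inner_smul_right]
      ring
    have hflt : c < ((m : ℝ) - 1) * (‖d‖⁻¹ ^ 2 * ⟪wvec A hm x d, d⟫) - tpow A x := by
      have h3 : c < Qtil A hm (x, dh) := hmem
      rw [Qtil_mk, hPdh, hxdh, hws, hdhn] at h3
      simpa using h3
    have hd2 : (0:ℝ) < ‖d‖ ^ 2 := by positivity
    have key : ((m : ℝ) - 1) * (‖d‖⁻¹ ^ 2 * ⟪wvec A hm x d, d⟫) * ‖d‖ ^ 2
        = ((m : ℝ) - 1) * ⟪wvec A hm x d, d⟫ := by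
      field_simp
    nlinarith [mul_lt_mul_of_pos_right hflt hd2, key]

end Helpers4
set_option maxHeartbeats 2000000 in
/-- under Assumption (A), the Newton step is quadratically accurate before
projection onto the sphere. -/
theorem stmt8 {m n : ℕ} (hn : 1 ≤ n) (hm : 2 ≤ m) (A : Tensor m n) (hA : IsSymmTensor A)
    (xb : Euc n) (lam : ℝ) (hAss : AssumpA A hm xb lam) :
    ∃ ε > 0, ∃ C > 0, ∀ x : Euc n, ‖x‖ = 1 → ‖x - xb‖ ≤ ε →
      ∀ d : Euc n, NewtonDir A hm x d →
        ‖d‖ ≤ C * ‖x - xb‖ ∧ ‖x + d - xb‖ ≤ C * ‖x - xb‖ ^ 2 := by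
  obtain ⟨c, hc, ε₀, hε₀, hcoer⟩ := coercivity A hm xb lam hAss
  obtain ⟨hxb1, heig, hlam, hsosc⟩ := hAss
  have hFxb : Fvec A hm xb = 0 := by
    unfold Fvec
    rw [heig, hlam, sub_self]
  have hCD := contDiff_Fvec A hm
  obtain ⟨K₂, t₂, ht₂, hlip₂⟩ :=
    ((hCD.of_le (by norm_num)).contDiffAt (x := xb)).exists_lipschitzOnWith
  obtain ⟨δ₂, hδ₂, hball₂⟩ := Metric.mem_nhds_iff.1 ht₂
  have hCD1 : ContDiff ℝ 1 (fderiv ℝ (Fvec A hm)) := hCD.fderiv_right (by norm_num)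
  obtain ⟨K, t₁, ht₁, hlip₁⟩ := (hCD1.contDiffAt (x := xb)).exists_lipschitzOnWith
  obtain ⟨δ₁, hδ₁, hball₁⟩ := Metric.mem_nhds_iff.1 ht₁
  obtain ⟨M, hM⟩ : ∃ M, ∀ z ∈ Metric.closedBall xb 1, ‖FderivL A hm z z‖ ≤ M := by
    have hcont : Continuous (fun z : Euc n => FderivL A hm z z) := by
      have heq : (fun z : Euc n => FderivL A hm z z)
          = fun z => ((m : ℝ) - 1) • wvec A hm z z - tpow A z • z
            - ((m : ℝ) * ⟪tvec A hm z, z⟫) • z := by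
        funext z
        exact FderivL_apply A hm z z
      rw [heq]
      refine Continuous.sub (Continuous.sub ?_ ?_) ?_
      · exact ((continuous_wvec_pair A hm).comp (continuous_id.prodMk continuous_id)).const_smul ((m : ℝ) - 1)
      · exact (continuous_tpow A).smul continuous_id
      · exact (continuous_const.mul ((continuous_tvec A hm).inner continuous_id)).fun_smul continuous_id
    exact (isCompact_closedBall xb 1).exists_bound_of_continuousOn hcont.continuousOn
  have hM0 : 0 ≤ M := le_trans (norm_nonneg _) (hM xb (by simp))
  have hK0 : (0:ℝ) ≤ (K : ℝ) := K.coe_nonneg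
  have hK₂0 : (0:ℝ) ≤ (K₂ : ℝ) := K₂.coe_nonneg
  obtain ⟨C, hCpos, hcC⟩ : ∃ C : ℝ, 0 < C ∧ c * C = (K₂ : ℝ) + (K : ℝ) + M / 2 + 1 + c := by
    refine ⟨((K₂ : ℝ) + (K : ℝ) + M / 2 + 1) / c + 1, by positivity, ?_⟩
    field_simp
  refine ⟨min 1 (min (ε₀ / 2) (min (δ₁ / 2) (δ₂ / 2))), by positivity, C, hCpos, ?_⟩
  intro x hx hxe d hNd
  obtain ⟨hxd, hNewt⟩ := hNd
  have hεle1 : ‖x - xb‖ ≤ 1 := le_trans hxe (min_le_left _ _)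
  have hεε₀ : ‖x - xb‖ < ε₀ := by
    have := le_trans hxe (le_trans (min_le_right _ _) (min_le_left _ _))
    linarith
  have hεδ₁ : ‖x - xb‖ < δ₁ := by
    have := le_trans hxe (le_trans (min_le_right _ _)
      (le_trans (min_le_right _ _) (min_le_left _ _)))
    linarith
  have hεδ₂ : ‖x - xb‖ < δ₂ := by
    have := le_trans hxe (le_trans (min_le_right _ _)
      (le_trans (min_le_right _ _) (min_le_right _ _)))
    linarith
  have hxt₁ : x ∈ t₁ := hball₁ (by simpa [Metric.mem_ball, dist_eq_norm] using hεδ₁)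
  have hxbt₁ : xb ∈ t₁ := hball₁ (Metric.mem_ball_self hδ₁)
  have hxt₂ : x ∈ t₂ := hball₂ (by simpa [Metric.mem_ball, dist_eq_norm] using hεδ₂)
  have hxbt₂ : xb ∈ t₂ := hball₂ (Metric.mem_ball_self hδ₂)
  have hFbd : ‖Fvec A hm x‖ ≤ (K₂ : ℝ) * ‖x - xb‖ := by
    have h := hlip₂.dist_le_mul x hxt₂ xb hxbt₂
    rw [dist_eq_norm, dist_eq_norm, hFxb, sub_zero] at h
    exact h
  have hPzero : Pproj x (FderivL A hm x d) = -Pproj x (Fvec A hm x) := by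
    have h := hNewt
    rw [Pproj_add] at h
    exact eq_neg_of_add_eq_zero_left h
  -- first bound
  have hQd : c * ‖d‖ ^ 2 ≤ ⟪FderivL A hm x d, d⟫ := by
    rw [inner_FderivL A hm x d d hxd rfl]
    exact hcoer x hεε₀ d hxd
  have hip : ⟪FderivL A hm x d, d⟫ ≤ (K₂ : ℝ) * ‖x - xb‖ * ‖d‖ := by
    have h1 : ⟪FderivL A hm x d, d⟫ = ⟪Pproj x (FderivL A hm x d), d⟫ :=
      (inner_Pproj_eq x _ d hxd).symm
    rw [h1, hPzero, inner_neg_left]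
    have h3 := abs_real_inner_le_norm (Pproj x (Fvec A hm x)) d
    have h4 : ‖Pproj x (Fvec A hm x)‖ ≤ ‖Fvec A hm x‖ := norm_Pproj_le x _ hx
    have h5 := neg_abs_le (⟪Pproj x (Fvec A hm x), d⟫ : ℝ)
    nlinarith [norm_nonneg d, norm_nonneg (Pproj x (Fvec A hm x)), hFbd]
  have hdbd : ‖d‖ ≤ C * ‖x - xb‖ := by
    rcases eq_or_ne d 0 with rfl | hd0
    · rw [norm_zero]
      positivity
    · have hdpos : 0 < ‖d‖ := norm_pos_iff.mpr hd0
      have h6 : c * ‖d‖ ≤ (K₂ : ℝ) * ‖x - xb‖ := by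
        have h7 : c * ‖d‖ * ‖d‖ ≤ (K₂ : ℝ) * ‖x - xb‖ * ‖d‖ := by nlinarith [hQd, hip]
        exact le_of_mul_le_mul_right h7 hdpos
      have h8 : c * ‖d‖ ≤ c * (C * ‖x - xb‖) := by
        have h9 : (K₂ : ℝ) * ‖x - xb‖ ≤ c * C * ‖x - xb‖ := by
          rw [hcC]
          nlinarith [norm_nonneg (x - xb), hc, hK0, hM0]
        calc c * ‖d‖ ≤ (K₂ : ℝ) * ‖x - xb‖ := h6
          _ ≤ c * C * ‖x - xb‖ := h9
          _ = c * (C * ‖x - xb‖) := by ring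
      exact le_of_mul_le_mul_left h8 hc
  refine ⟨hdbd, ?_⟩
  -- Taylor estimate
  have hxball : x ∈ Metric.ball xb δ₁ := by
    simpa [Metric.mem_ball, dist_eq_norm] using hεδ₁
  have hseg : segment ℝ x xb ⊆ Metric.ball xb δ₁ :=
    (convex_ball xb δ₁).segment_subset hxball (Metric.mem_ball_self hδ₁)
  have hder : ∀ z ∈ segment ℝ x xb,
      HasFDerivWithinAt (fun y => Fvec A hm y - FderivL A hm x y)
        (fderiv ℝ (Fvec A hm) z - FderivL A hm x) (segment ℝ x xb) z := by
    intro z _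
    rw [fderiv_Fvec_eq A hm hA z]
    exact ((hasFDerivAt_Fvec A hm hA z).sub
      ((FderivL A hm x).hasFDerivAt)).hasFDerivWithinAt
  have hbound : ∀ z ∈ segment ℝ x xb,
      ‖fderiv ℝ (Fvec A hm) z - FderivL A hm x‖ ≤ (K : ℝ) * ‖x - xb‖ := by
    intro z hz
    have hzt₁ : z ∈ t₁ := hball₁ (hseg hz)
    have hzx : ‖z - x‖ ≤ ‖x - xb‖ := by
      obtain ⟨a, b, ha, hb, hab, rfl⟩ := hz
      have hrw : a • x + b • xb - x = b • (xb - x) := by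
        have hA1 : a = 1 - b := by linarith
        rw [hA1]
        module
      rw [hrw, norm_smul, norm_sub_rev xb x, Real.norm_eq_abs, abs_of_nonneg hb]
      nlinarith [norm_nonneg (x - xb)]
    have h := hlip₁.dist_le_mul z hzt₁ x hxt₁
    rw [dist_eq_norm] at h
    rw [dist_eq_norm] at h
    rw [fderiv_Fvec_eq A hm hA x] at h
    calc ‖fderiv ℝ (Fvec A hm) z - FderivL A hm x‖ ≤ (K : ℝ) * ‖z - x‖ := h
      _ ≤ (K : ℝ) * ‖x - xb‖ := by nlinarith
  have htay : ‖Fvec A hm x - FderivL A hm x (x - xb)‖ ≤ (K : ℝ) * ‖x - xb‖ ^ 2 := by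
    have hmv := (convex_segment x xb).norm_image_sub_le_of_norm_hasFDerivWithin_le
      hder hbound (left_mem_segment ℝ x xb) (right_mem_segment ℝ x xb)
    have hrw : (Fvec A hm xb - FderivL A hm x xb) - (Fvec A hm x - FderivL A hm x x)
        = -(Fvec A hm x - FderivL A hm x (x - xb)) := by
      rw [hFxb, map_sub]
      abel
    rw [hrw, norm_neg, norm_sub_rev xb x] at hmv
    calc ‖Fvec A hm x - FderivL A hm x (x - xb)‖ ≤ (K : ℝ) * ‖x - xb‖ * ‖x - xb‖ := hmv
      _ = (K : ℝ) * ‖x - xb‖ ^ 2 := by ring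
  -- second bound
  set u : Euc n := x + d - xb with hu
  have hud : u = d + (x - xb) := by
    rw [hu]
    abel
  have hx2 : ⟪x, x⟫ = (1:ℝ) := by
    rw [real_inner_self_eq_norm_sq, hx, one_pow]
  have hxb2 : ⟪xb, xb⟫ = (1:ℝ) := by
    rw [real_inner_self_eq_norm_sq, hxb1, one_pow]
  have hne : ‖x - xb‖ ^ 2 = 2 - 2 * ⟪x, xb⟫ := by
    rw [← real_inner_self_eq_norm_sq, inner_sub_left, inner_sub_right, inner_sub_right,
      hx2, hxb2, real_inner_comm xb x]
    ring
  have hxu : ⟪x, u⟫ = ‖x - xb‖ ^ 2 / 2 := by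
    rw [hud, inner_add_right, hxd, zero_add, inner_sub_right, hx2, hne]
    ring
  set t' : Euc n := Pproj x u with ht'
  have hxt' : ⟪x, t'⟫ = 0 := inner_Pproj_self x u hx
  have hPLu : ‖Pproj x (FderivL A hm x u)‖ ≤ (K : ℝ) * ‖x - xb‖ ^ 2 := by
    have hsplit : FderivL A hm x u
        = (FderivL A hm x d + Fvec A hm x) + (FderivL A hm x (x - xb) - Fvec A hm x) := by
      rw [hud, map_add]
      abel
    rw [hsplit, Pproj_add, hNewt, zero_add]
    calc ‖Pproj x (FderivL A hm x (x - xb) - Fvec A hm x)‖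
        ≤ ‖FderivL A hm x (x - xb) - Fvec A hm x‖ := norm_Pproj_le _ _ hx
      _ = ‖Fvec A hm x - FderivL A hm x (x - xb)‖ := norm_sub_rev _ _
      _ ≤ (K : ℝ) * ‖x - xb‖ ^ 2 := htay
  have hMx : ‖FderivL A hm x x‖ ≤ M :=
    hM x (by simpa [Metric.mem_closedBall, dist_eq_norm] using hεle1)
  have ht'bd : c * ‖t'‖ ≤ ((K : ℝ) + M / 2) * ‖x - xb‖ ^ 2 := by
    have hco := hcoer x hεε₀ t' hxt'
    have hdecomp : FderivL A hm x t' = FderivL A hm x u - ⟪x, u⟫ • FderivL A hm x x := by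
      rw [ht']
      show FderivL A hm x (u - ⟪x, u⟫ • x) = _
      rw [map_sub, map_smul]
    have hips : ⟪FderivL A hm x t', t'⟫
        = ⟪Pproj x (FderivL A hm x u), t'⟫ - ⟪x, u⟫ * ⟪FderivL A hm x x, t'⟫ := by
      rw [hdecomp, inner_sub_left, real_inner_smul_left, inner_Pproj_eq x _ t' hxt']
    have h1 : ⟪Pproj x (FderivL A hm x u), t'⟫ ≤ (K : ℝ) * ‖x - xb‖ ^ 2 * ‖t'‖ :=
      le_trans (real_inner_le_norm _ _) (mul_le_mul_of_nonneg_right hPLu (norm_nonneg _))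
    have hb : |⟪FderivL A hm x x, t'⟫| ≤ M * ‖t'‖ :=
      le_trans (abs_real_inner_le_norm _ _)
        (mul_le_mul_of_nonneg_right hMx (norm_nonneg _))
    have h2 : -(⟪x, u⟫ * ⟪FderivL A hm x x, t'⟫) ≤ (‖x - xb‖ ^ 2 / 2) * (M * ‖t'‖) := by
      rw [hxu]
      have hnn : (0:ℝ) ≤ ‖x - xb‖ ^ 2 / 2 := by positivity
      nlinarith [neg_abs_le (⟪FderivL A hm x x, t'⟫ : ℝ), abs_nonneg (⟪FderivL A hm x x, t'⟫ : ℝ)]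
    have hQt : c * ‖t'‖ ^ 2 ≤ ⟪FderivL A hm x t', t'⟫ := by
      rw [inner_FderivL A hm x t' t' hxt' rfl]
      exact hco
    rcases eq_or_ne t' 0 with h | h
    · rw [h, norm_zero, mul_zero]
      positivity
    · have ht'pos : 0 < ‖t'‖ := norm_pos_iff.mpr h
      have hcomb : c * ‖t'‖ * ‖t'‖ ≤ (((K : ℝ) + M / 2) * ‖x - xb‖ ^ 2) * ‖t'‖ := by
        nlinarith [hQt, hips, h1, h2]
      exact le_of_mul_le_mul_right hcomb ht'pos
  have hut : ‖u‖ ≤ ‖t'‖ + ‖x - xb‖ ^ 2 / 2 := by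
    have hrw : u = t' + ⟪x, u⟫ • x := by
      rw [ht']
      show u = (u - ⟪x, u⟫ • x) + ⟪x, u⟫ • x
      abel
    calc ‖u‖ = ‖t' + ⟪x, u⟫ • x‖ := by rw [← hrw]
      _ ≤ ‖t'‖ + ‖⟪x, u⟫ • x‖ := norm_add_le _ _
      _ = ‖t'‖ + ‖x - xb‖ ^ 2 / 2 := by
          rw [norm_smul, hx, mul_one, hxu, Real.norm_eq_abs, abs_of_nonneg (by positivity)]
  have hgoal : c * ‖u‖ ≤ c * (C * ‖x - xb‖ ^ 2) := by
    have h6 : c * ‖u‖ ≤ ((K : ℝ) + M / 2 + c / 2) * ‖x - xb‖ ^ 2 := by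
      nlinarith [hut, ht'bd, hc, sq_nonneg ‖x - xb‖]
    have h7 : ((K : ℝ) + M / 2 + c / 2) * ‖x - xb‖ ^ 2 ≤ c * C * ‖x - xb‖ ^ 2 := by
      rw [hcC]
      nlinarith [sq_nonneg ‖x - xb‖, hK₂0, hc]
    calc c * ‖u‖ ≤ ((K : ℝ) + M / 2 + c / 2) * ‖x - xb‖ ^ 2 := h6
      _ ≤ c * C * ‖x - xb‖ ^ 2 := h7
      _ = c * (C * ‖x - xb‖ ^ 2) := by ring
  have hufin : ‖u‖ ≤ C * ‖x - xb‖ ^ 2 := le_of_mul_le_mul_left hgoal hc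
  exact hufin
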